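/- For x ∈ C¹([a,b],ℝ) and differentiable α : (a,b) → (0,1), the type I left Riemann–Liouville and Caputo variable-order derivatives are related by ₐD_t^{α(t)} x(t) = ᶜₐD_t^{α(t)} x(t) + (x(a)/Γ(1-α(t))) (t-a)^{-α(t)} + (x(a) α'(t)/Γ(2-α(t))) (t-a)^{1-α(t)} [1/(1-α(t)) − ln(t-a)]. -/

import Mathlib

open Real intervalIntegral Set MeasureTheory Filter Metric
open scoped Topology Interval

set_option maxHeartbeats 1000000 in
/-- Relation between the type I left Riemann--Liouville and Caputo derivatives
of variable order. -/
theorem riemannLiouville_eq_caputo_add_correction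
    (a b : ℝ) (hab : a < b) (x α : ℝ → ℝ)
    (hx : ContDiffOn ℝ 1 x (Set.Icc a b))
    (hα : DifferentiableOn ℝ α (Set.Ioo a b))
    (hα01 : ∀ s ∈ Set.Ioo a b, α s ∈ Set.Ioo (0 : ℝ) 1)
    (t : ℝ) (ht : t ∈ Set.Ioo a b) :
    (1 / Real.Gamma (1 - α t)) *
        deriv (fun s => ∫ τ in a..s, (s - τ) ^ (-(α s)) * x τ) t =
      (1 / Real.Gamma (1 - α t)) *
          deriv (fun s => ∫ τ in a..s, (s - τ) ^ (-(α s)) * (x τ - x a)) t +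
        (x a / Real.Gamma (1 - α t)) * (t - a) ^ (-(α t)) +
        (x a * deriv α t / Real.Gamma (2 - α t)) * (t - a) ^ (1 - α t) *
          (1 / (1 - α t) - Real.log (t - a)) := by
  obtain ⟨hta, htb⟩ := ht
  obtain ⟨h0α, hα1⟩ := hα01 t ⟨hta, htb⟩
  have hΓpos : 0 < Real.Gamma (1 - α t) := Real.Gamma_pos_of_pos (by linarith)
  have h1α : (1 : ℝ) - α t ≠ 0 := by linarith
  -- basic facts about `x`
  set x' : ℝ → ℝ := fun τ => derivWithin x (Set.Icc a b) τ with hx'def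
  have hxc : ContinuousOn x (Set.Icc a b) := hx.continuousOn
  have hx'c : ContinuousOn x' (Set.Icc a b) :=
    hx.continuousOn_derivWithin (uniqueDiffOn_Icc hab) le_rfl
  have hxderiv : ∀ τ ∈ Set.Ioo a b, HasDerivAt x (x' τ) τ := by
    intro τ hτ
    have h1 : DifferentiableWithinAt ℝ x (Set.Icc a b) τ :=
      (hx.differentiableOn one_ne_zero) τ (Ioo_subset_Icc_self hτ)
    exact h1.hasDerivWithinAt.hasDerivAt (Icc_mem_nhds hτ.1 hτ.2)
  obtain ⟨Y, hY⟩ := (isCompact_Icc (a := a) (b := b)).exists_bound_of_continuousOn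
      (hxc.sub (continuousOn_const (c := x a)))
  obtain ⟨X, hX⟩ := (isCompact_Icc (a := a) (b := b)).exists_bound_of_continuousOn hx'c
  have hY0 : 0 ≤ Y := le_trans (norm_nonneg _) (hY a ⟨le_rfl, hab.le⟩)
  have hX0 : 0 ≤ X := le_trans (norm_nonneg _) (hX a ⟨le_rfl, hab.le⟩)
  -- `α` is differentiable at `t`
  have hαd : DifferentiableAt ℝ α t :=
    (hα t ⟨hta, htb⟩).differentiableAt (Ioo_mem_nhds hta htb)
  have hαt : HasDerivAt α (deriv α t) t := hαd.hasDerivAt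
  -- constants
  set c : ℝ := (α t + 1) / 2 with hc_def
  have hcα : α t < c := by rw [hc_def]; linarith
  have hc1 : c < 1 := by rw [hc_def]; linarith
  have hc0 : 0 < c := by rw [hc_def]; linarith
  set ε : ℝ := min (c - α t) (min (t - a) (b - t)) with hε_def
  have hε : 0 < ε := by
    refine lt_min (by linarith) (lt_min (by linarith) (by linarith))
  have hball : ∀ p : ℝ × ℝ, p ∈ ball ((α t, t) : ℝ × ℝ) ε → p.1 ≤ c ∧ p.2 ∈ Set.Ioo a b := by
    intro p hp
    rw [mem_ball, Prod.dist_eq, max_lt_iff] at hp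
    obtain ⟨h1, h2⟩ := hp
    rw [Real.dist_eq, abs_lt] at h1 h2
    have hε1 : ε ≤ c - α t := min_le_left _ _
    have hε2 : ε ≤ t - a := le_trans (min_le_right _ _) (min_le_left _ _)
    have hε3 : ε ≤ b - t := le_trans (min_le_right _ _) (min_le_right _ _)
    exact ⟨by linarith [h1.2], ⟨by linarith [h2.1], by linarith [h2.2]⟩⟩
  have hIoc : Ι (0:ℝ) 1 = Set.Ioc 0 1 := Set.uIoc_of_le zero_le_one
  have hres : volume.restrict (Set.Ioc (0:ℝ) 1) = volume.restrict (Set.Ioo (0:ℝ) 1) :=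
    (Measure.restrict_congr_set Ioo_ae_eq_Ioc).symm
  have hae1 : ∀ᵐ (u : ℝ), u ≠ 1 := by
    rw [ae_iff]
    have : {u : ℝ | ¬ u ≠ 1} = {1} := by ext u; simp
    rw [this]; exact Real.volume_singleton
  -- the parametric integrand and its derivative
  set F : ℝ × ℝ → ℝ → ℝ := fun p u => (1-u) ^ (-p.1) * (x (a + (p.2 - a) * u) - x a)
    with hF_def
  set F' : ℝ × ℝ → ℝ → (ℝ × ℝ →L[ℝ] ℝ) := fun p u =>
    ((1-u) ^ (-p.1)) • ((x' (a + (p.2 - a) * u)) • ((u : ℝ) • ContinuousLinearMap.snd ℝ ℝ ℝ))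
    + (x (a + (p.2 - a) * u) - x a) •
        (((1-u) ^ (-p.1) * Real.log (1-u)) • (-(ContinuousLinearMap.fst ℝ ℝ ℝ)))
    with hF'_def
  set bound : ℝ → ℝ := fun u => Y * |Real.log (1-u)| * (1-u) ^ (-c) + X * (1-u) ^ (-c)
    with hbound_def
  -- auxiliary: mapping of the affine map into `Icc a b`
  have hmaps : ∀ s ∈ Set.Ioo a b, ∀ u ∈ Set.Icc (0:ℝ) 1, a + (s - a) * u ∈ Set.Icc a b := by
    intro s hs u hu
    constructor
    · nlinarith [hs.1, hu.1]
    · nlinarith [hs.1, hs.2, hu.1, hu.2]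
  have hmaps' : ∀ s ∈ Set.Ioo a b, ∀ u ∈ Set.Ioo (0:ℝ) 1, a + (s - a) * u ∈ Set.Ioo a b := by
    intro s hs u hu
    constructor
    · nlinarith [hs.1, hu.1]
    · nlinarith [hs.1, hs.2, hu.1, hu.2]
  -- measurability hypotheses
  have hF_meas : ∀ᶠ p in 𝓝 ((α t, t) : ℝ × ℝ),
      AEStronglyMeasurable (F p) (volume.restrict (Ι (0:ℝ) 1)) := by
    filter_upwards [ball_mem_nhds _ hε] with p hp
    have hp2 := (hball p hp).2
    rw [hIoc, hres]
    refine ContinuousOn.aestronglyMeasurable ?_ measurableSet_Ioo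
    refine ContinuousOn.mul ?_ ?_
    · refine ContinuousOn.rpow_const ?_ ?_
      · exact (continuous_const.sub continuous_id).continuousOn
      · intro u hu
        refine Or.inl ?_
        intro h
        rw [sub_eq_zero] at h
        linarith [hu.2]
    · refine ContinuousOn.sub ?_ continuousOn_const
      refine hxc.comp ?_ ?_
      · exact (continuous_const.add ((continuous_const.sub continuous_const).mul continuous_id)).continuousOn
      · intro u hu
        exact hmaps p.2 hp2 u (Ioo_subset_Icc_self hu)
  -- interval integrability of the basic kernel
  have hbase : ∀ r : ℝ, -1 < r → IntervalIntegrable (fun u : ℝ => (1-u) ^ r) volume 0 1 := by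
    intro r hr
    have h := (intervalIntegrable_rpow' (a := (1:ℝ)) (b := 0) (r := r) hr).comp_sub_left 1
    simpa using h
  have haffc : Continuous (fun u : ℝ => a + (t - a) * u) :=
    continuous_const.add (continuous_const.mul continuous_id)
  have hxaff : ContinuousOn (fun u : ℝ => x (a + (t - a) * u) - x a) (Set.Icc (0:ℝ) 1) := by
    refine ContinuousOn.sub ?_ continuousOn_const
    exact hxc.comp haffc.continuousOn (fun u hu => hmaps t ⟨hta, htb⟩ u hu)
  have hF_int : IntervalIntegrable (F ((α t, t) : ℝ × ℝ)) volume 0 1 := by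
    have h := (hbase (-(α t)) (by linarith)).mul_continuousOn
      (g := fun u : ℝ => x (a + (t - a) * u) - x a) (by
        rw [Set.uIcc_of_le (zero_le_one (α := ℝ))]; exact hxaff)
    simpa [hF_def] using h
  have hF'_meas : AEStronglyMeasurable (F' ((α t, t) : ℝ × ℝ)) (volume.restrict (Ι (0:ℝ) 1)) := by
    rw [hIoc, hres]
    refine ContinuousOn.aestronglyMeasurable ?_ measurableSet_Ioo
    have h1u : ∀ u ∈ Set.Ioo (0:ℝ) 1, (1 : ℝ) - u ≠ 0 := by
      intro u hu; intro h; rw [sub_eq_zero] at h; linarith [hu.2]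
    have hA : ContinuousOn (fun u : ℝ => (1-u) ^ (-(α t))) (Set.Ioo (0:ℝ) 1) :=
      ContinuousOn.rpow_const (continuous_const.sub continuous_id).continuousOn
        (fun u hu => Or.inl (h1u u hu))
    have hB : ContinuousOn (fun u : ℝ => x' (a + (t - a) * u)) (Set.Ioo (0:ℝ) 1) :=
      hx'c.comp haffc.continuousOn
        (fun u hu => hmaps t ⟨hta, htb⟩ u (Ioo_subset_Icc_self hu))
    have hC : ContinuousOn (fun u : ℝ => x (a + (t - a) * u) - x a) (Set.Ioo (0:ℝ) 1) :=
      hxaff.mono Ioo_subset_Icc_self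
    have hL : ContinuousOn (fun u : ℝ => Real.log (1-u)) (Set.Ioo (0:ℝ) 1) :=
      ContinuousOn.log (continuous_const.sub continuous_id).continuousOn
        (fun u hu => h1u u hu)
    simp only [hF'_def]
    exact (hA.smul (hB.smul ((continuous_id.continuousOn).smul continuousOn_const))).add
      (hC.smul ((hA.mul hL).smul continuousOn_const))
  have h_bound : ∀ᵐ u ∂(volume : Measure ℝ), u ∈ Ι (0:ℝ) 1 →
      ∀ p ∈ ball ((α t, t) : ℝ × ℝ) ε, ‖F' p u‖ ≤ bound u := by
    filter_upwards [hae1] with u hune hu p hp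
    rw [hIoc] at hu
    have hu0 : 0 < u := hu.1
    have hu1' : u < 1 := lt_of_le_of_ne hu.2 hune
    have h1u : 0 < 1 - u := by linarith
    have hθ : a + (p.2 - a) * u ∈ Set.Icc a b :=
      hmaps p.2 (hball p hp).2 u ⟨hu0.le, hu.2⟩
    have hrp : (1-u) ^ (-p.1) ≤ (1-u) ^ (-c) :=
      Real.rpow_le_rpow_of_exponent_ge h1u (by linarith) (by linarith [(hball p hp).1])
    have hrp0 : (0:ℝ) ≤ (1-u) ^ (-p.1) := Real.rpow_nonneg h1u.le _
    have hrpc0 : (0:ℝ) ≤ (1-u) ^ (-c) := Real.rpow_nonneg h1u.le _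
    have hfst : ‖(ContinuousLinearMap.fst ℝ ℝ ℝ)‖ ≤ 1 := by
      refine ContinuousLinearMap.opNorm_le_bound _ zero_le_one (fun h => ?_)
      rw [one_mul]; simpa using norm_fst_le h
    have hsnd : ‖(ContinuousLinearMap.snd ℝ ℝ ℝ)‖ ≤ 1 := by
      refine ContinuousLinearMap.opNorm_le_bound _ zero_le_one (fun h => ?_)
      rw [one_mul]; simpa using norm_snd_le h
    have hBb : |x' (a + (p.2 - a) * u)| ≤ X := by
      simpa [Real.norm_eq_abs] using hX _ hθ
    have hCb : |x (a + (p.2 - a) * u) - x a| ≤ Y := by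
      simpa [Real.norm_eq_abs] using hY _ hθ
    calc ‖F' p u‖
        ≤ ‖((1-u) ^ (-p.1)) • ((x' (a + (p.2 - a) * u)) •
              ((u : ℝ) • ContinuousLinearMap.snd ℝ ℝ ℝ))‖ +
          ‖(x (a + (p.2 - a) * u) - x a) •
              (((1-u) ^ (-p.1) * Real.log (1-u)) • (-(ContinuousLinearMap.fst ℝ ℝ ℝ)))‖ := by
          simp only [hF'_def]; exact norm_add_le _ _
      _ ≤ X * (1-u) ^ (-c) + Y * |Real.log (1-u)| * (1-u) ^ (-c) := by
          rw [norm_smul ((1-u) ^ (-p.1))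
              (x' (a + (p.2 - a) * u) • (u : ℝ) • ContinuousLinearMap.snd ℝ ℝ ℝ),
            norm_smul (x' (a + (p.2 - a) * u)) ((u:ℝ) • ContinuousLinearMap.snd ℝ ℝ ℝ),
            norm_smul (u : ℝ) (ContinuousLinearMap.snd ℝ ℝ ℝ),
            norm_smul (x (a + (p.2 - a) * u) - x a)
              (((1-u) ^ (-p.1) * Real.log (1-u)) • (-(ContinuousLinearMap.fst ℝ ℝ ℝ))),
            norm_smul ((1-u) ^ (-p.1) * Real.log (1-u)) (-(ContinuousLinearMap.fst ℝ ℝ ℝ)),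
            norm_neg]
          simp only [Real.norm_eq_abs]
          rw [abs_of_nonneg hrp0, abs_of_pos hu0, abs_mul, abs_of_nonneg hrp0]
          have e1 : ((1-u) ^ (-p.1)) * (|x' (a + (p.2 - a) * u)| *
              (u * ‖ContinuousLinearMap.snd ℝ ℝ ℝ‖)) ≤ (1-u) ^ (-c) * (X * (1 * 1)) := by
            gcongr
            all_goals first | exact hrp | exact hBb | exact hsnd | exact hu1'.le | positivity
          have e2 : |x (a + (p.2 - a) * u) - x a| * (((1-u) ^ (-p.1) * |Real.log (1-u)|) *
              ‖ContinuousLinearMap.fst ℝ ℝ ℝ‖) ≤ Y * (((1-u) ^ (-c) * |Real.log (1-u)|) * 1) := by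
            gcongr
            all_goals first | exact hrp | exact hCb | exact hfst | positivity
          nlinarith [e1, e2]
      _ = bound u := by rw [hbound_def]; ring
  have hlogint : IntervalIntegrable (fun v : ℝ => |Real.log v| * v ^ (-c)) volume 0 1 := by
    set e : ℝ := (1 - c)/2 with he_def
    have he : 0 < e := by rw [he_def]; linarith
    have hint : IntervalIntegrable (fun v : ℝ => v ^ (-c - e) / e) volume 0 1 :=
      (intervalIntegrable_rpow' (by rw [he_def]; linarith)).div_const e
    refine hint.mono_fun ?_ ?_
    · rw [hIoc, hres]
      refine ContinuousOn.aestronglyMeasurable ?_ measurableSet_Ioo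
      refine ContinuousOn.mul ?_ ?_
      · exact (Real.continuousOn_log.mono fun v hv => by
          simpa using (ne_of_gt hv.1)).abs
      · exact ContinuousOn.rpow_const continuousOn_id fun v hv => Or.inl (ne_of_gt hv.1)
    · rw [hIoc]
      filter_upwards [ae_restrict_mem measurableSet_Ioc] with v hv
      have hv0 : 0 < v := hv.1
      have hv1 : v ≤ 1 := hv.2
      have h1 : |Real.log v| ≤ v ^ (-e) / e := by
        rw [abs_of_nonpos (Real.log_nonpos hv0.le hv1)]
        have h2 := Real.log_le_rpow_div (x := v⁻¹) (by positivity) he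
        rw [Real.log_inv, Real.inv_rpow hv0.le, ← Real.rpow_neg hv0.le] at h2
        linarith
      have h2 : ‖|Real.log v| * v ^ (-c)‖ = |Real.log v| * v ^ (-c) := by
        rw [Real.norm_eq_abs,
          abs_of_nonneg (mul_nonneg (abs_nonneg _) (Real.rpow_nonneg hv0.le _))]
      have h3 : ‖v ^ (-c - e)/e‖ = v ^ (-c - e)/e := by
        rw [Real.norm_eq_abs]; exact abs_of_nonneg (by positivity)
      rw [h2, h3]
      calc |Real.log v| * v ^ (-c) ≤ (v ^ (-e)/e) * v ^ (-c) := by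
            exact mul_le_mul_of_nonneg_right h1 (Real.rpow_nonneg hv0.le _)
        _ = v ^ (-c - e)/e := by
            rw [div_mul_eq_mul_div, ← Real.rpow_add hv0, show -e + -c = -c - e by ring]
  have hlogint1 : IntervalIntegrable
      (fun u : ℝ => |Real.log (1-u)| * (1-u) ^ (-c)) volume 0 1 := by
    have h := (hlogint.symm).comp_sub_left 1
    simpa using h
  have bound_int : IntervalIntegrable bound volume 0 1 := by
    rw [hbound_def]
    refine IntervalIntegrable.add ?_ ((hbase (-c) (by linarith)).const_mul X)
    have h := hlogint1.const_mul Y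
    simpa [mul_assoc] using h
  have h_diff : ∀ᵐ u ∂(volume : Measure ℝ), u ∈ Ι (0:ℝ) 1 →
      ∀ p ∈ ball ((α t, t) : ℝ × ℝ) ε, HasFDerivAt (fun q => F q u) (F' p u) p := by
    filter_upwards [hae1] with u hune hu p hp
    rw [hIoc] at hu
    have hu0 : 0 < u := hu.1
    have hu1' : u < 1 := lt_of_le_of_ne hu.2 hune
    have h1u : 0 < 1 - u := by linarith
    have hθ : a + (p.2 - a) * u ∈ Set.Ioo a b :=
      hmaps' p.2 (hball p hp).2 u ⟨hu0, hu1'⟩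
    have hc' : HasFDerivAt (fun q : ℝ × ℝ => (1-u) ^ (-q.1))
        (((1-u) ^ (-p.1) * Real.log (1-u)) • (-(ContinuousLinearMap.fst ℝ ℝ ℝ))) p :=
      HasFDerivAt.const_rpow (hasFDerivAt_fst.neg) h1u
    have hi : HasFDerivAt (fun q : ℝ × ℝ => a + (q.2 - a) * u)
        ((u : ℝ) • ContinuousLinearMap.snd ℝ ℝ ℝ) p :=
      ((hasFDerivAt_snd.sub_const a).mul_const u).const_add a
    have hd' : HasFDerivAt (fun q : ℝ × ℝ => x (a + (q.2 - a) * u) - x a)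
        ((x' (a + (p.2 - a) * u)) • ((u : ℝ) • ContinuousLinearMap.snd ℝ ℝ ℝ)) p :=
      ((hxderiv _ hθ).comp_hasFDerivAt p hi).sub_const (x a)
    exact hc'.mul hd'
  have key := intervalIntegral.hasFDerivAt_integral_of_dominated_of_fderiv_le
    (𝕜 := ℝ) (μ := volume) (F := F) (F' := F') (x₀ := ((α t, t) : ℝ × ℝ)) (a := 0) (b := 1)
    (bound := bound) (ball_mem_nhds _ hε) hF_meas hF_int hF'_meas h_bound bound_int h_diff
  -- differentiability of the transformed Caputo integral
  have hJd : DifferentiableAt ℝ (fun s => ∫ u in (0:ℝ)..1, F ((α s, s) : ℝ × ℝ) u) t := by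
    have h1 : DifferentiableAt ℝ (fun s : ℝ => ((α s, s) : ℝ × ℝ)) t :=
      hαd.prodMk differentiableAt_id
    have h2 : DifferentiableAt ℝ
        ((fun p : ℝ × ℝ => ∫ u in (0:ℝ)..1, F p u) ∘ (fun s : ℝ => ((α s, s) : ℝ × ℝ))) t :=
      DifferentiableAt.comp t key.differentiableAt h1
    exact h2
  -- substitution identity
  have hGeq : ∀ s ∈ Set.Ioo a b,
      (∫ τ in a..s, (s - τ) ^ (-(α s)) * (x τ - x a))
        = (s - a) ^ (1 - α s) * ∫ u in (0:ℝ)..1, F ((α s, s) : ℝ × ℝ) u := by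
    intro s hs
    have hsa : 0 < s - a := by linarith [hs.1]
    have h1 := intervalIntegral.smul_integral_comp_mul_add (a := (0:ℝ)) (b := 1)
      (f := fun τ => (s - τ) ^ (-(α s)) * (x τ - x a)) (s-a) a
    rw [show (s-a)*0 + a = a by ring, show (s-a)*1 + a = s by ring] at h1
    have h2 : (∫ u in (0:ℝ)..1, (s - ((s-a) * u + a)) ^ (-(α s)) * (x ((s-a) * u + a) - x a))
        = ∫ u in (0:ℝ)..1, (s-a) ^ (-(α s)) * F ((α s, s) : ℝ × ℝ) u := by
      refine intervalIntegral.integral_congr ?_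
      intro u hu
      rw [Set.uIcc_of_le (zero_le_one (α := ℝ))] at hu
      have h1u : (0:ℝ) ≤ 1 - u := by linarith [hu.2]
      simp only [hF_def]
      rw [show s - ((s-a) * u + a) = (s-a) * (1-u) by ring,
        Real.mul_rpow hsa.le h1u,
        show (s-a) * u + a = a + (s - a) * u by ring]
      ring
    rw [h2, intervalIntegral.integral_const_mul] at h1
    rw [← h1]
    rw [show (1 : ℝ) - α s = 1 + -(α s) by ring, Real.rpow_add hsa, Real.rpow_one]
    simp only [smul_eq_mul]
    ring
  -- derivative facts for the power factor
  have hsub : HasDerivAt (fun s : ℝ => s - a) 1 t := (hasDerivAt_id t).sub_const a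
  have h1mα : HasDerivAt (fun s : ℝ => 1 - α s) (-deriv α t) t := hαt.const_sub 1
  have hN : HasDerivAt (fun s : ℝ => (s - a) ^ (1 - α s))
      (1 * (1 - α t) * (t - a) ^ (1 - α t - 1)
        + (-deriv α t) * (t - a) ^ (1 - α t) * Real.log (t - a)) t :=
    hsub.rpow h1mα (by linarith)
  -- differentiability of the Caputo integral function
  have hGd : DifferentiableAt ℝ (fun s => ∫ τ in a..s, (s - τ) ^ (-(α s)) * (x τ - x a)) t := by
    have heq : (fun s => ∫ τ in a..s, (s - τ) ^ (-(α s)) * (x τ - x a)) =ᶠ[𝓝 t]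
        (fun s => (s - a) ^ (1 - α s) * ∫ u in (0:ℝ)..1, F ((α s, s) : ℝ × ℝ) u) :=
      eventuallyEq_of_mem (Ioo_mem_nhds hta htb) hGeq
    rw [heq.differentiableAt_iff]
    exact hN.differentiableAt.mul hJd
  -- splitting of the Riemann--Liouville integral
  have hFeq : (fun s => ∫ τ in a..s, (s - τ) ^ (-(α s)) * x τ) =ᶠ[𝓝 t]
      (fun s => (∫ τ in a..s, (s - τ) ^ (-(α s)) * (x τ - x a))
        + x a * ((s - a) ^ (1 - α s) * (1 - α s)⁻¹)) := by
    refine eventuallyEq_of_mem (Ioo_mem_nhds hta htb) ?_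
    intro s hs
    have hsa : 0 < s - a := by linarith [hs.1]
    obtain ⟨h0s, h1s⟩ := hα01 s hs
    have hbase2 : IntervalIntegrable (fun τ => (s - τ) ^ (-(α s))) volume a s := by
      have h := (intervalIntegrable_rpow' (a := s - a) (b := s - s) (r := -(α s))
        (by linarith)).comp_sub_left s
      simpa using h
    have hxcs : ContinuousOn (fun τ => x τ - x a) (Set.uIcc a s) := by
      rw [Set.uIcc_of_le hs.1.le]
      exact (hxc.sub continuousOn_const).mono (Set.Icc_subset_Icc le_rfl hs.2.le)
    have hint2 : IntervalIntegrable (fun τ => (s - τ) ^ (-(α s)) * (x τ - x a)) volume a s :=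
      hbase2.mul_continuousOn hxcs
    have hint3 : IntervalIntegrable (fun τ => (s - τ) ^ (-(α s)) * x a) volume a s :=
      hbase2.mul_const _
    have hsplit : (∫ τ in a..s, (s - τ) ^ (-(α s)) * x τ)
        = (∫ τ in a..s, (s - τ) ^ (-(α s)) * (x τ - x a))
          + ∫ τ in a..s, (s - τ) ^ (-(α s)) * x a := by
      rw [← intervalIntegral.integral_add hint2 hint3]
      refine intervalIntegral.integral_congr ?_
      intro τ _
      ring
    have hH : (∫ τ in a..s, (s - τ) ^ (-(α s))) = (s - a) ^ (1 - α s) * (1 - α s)⁻¹ := by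
      rw [integral_comp_sub_left (fun v => v ^ (-(α s))) s]
      rw [sub_self]
      rw [integral_rpow (Or.inl (by linarith))]
      rw [Real.zero_rpow (by linarith : -(α s) + 1 ≠ 0)]
      rw [show -(α s) + 1 = 1 - α s by ring]
      rw [sub_zero, div_eq_mul_inv]
    simp only
    rw [hsplit, intervalIntegral.integral_mul_const, hH]
    ring
  -- assemble the derivative
  have hinv : HasDerivAt (fun s : ℝ => (1 - α s)⁻¹) (-(-deriv α t) / (1 - α t) ^ 2) t :=
    h1mα.inv h1α
  have hC := (hN.mul hinv).const_mul (x a)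
  have hsum : deriv (fun s => ∫ τ in a..s, (s - τ) ^ (-(α s)) * x τ) t
      = deriv (fun s => ∫ τ in a..s, (s - τ) ^ (-(α s)) * (x τ - x a)) t
        + x a * ((1 * (1 - α t) * (t - a) ^ (1 - α t - 1)
            + (-deriv α t) * (t - a) ^ (1 - α t) * Real.log (t - a)) * (1 - α t)⁻¹
          + (t - a) ^ (1 - α t) * (-(-deriv α t) / (1 - α t) ^ 2)) := by
    rw [hFeq.deriv_eq]
    exact (hGd.hasDerivAt.add hC).deriv
  rw [hsum, show (2:ℝ) - α t = (1 - α t) + 1 by ring, Real.Gamma_add_one h1α,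
    show (1:ℝ) - α t - 1 = -α t by ring]
  have hne : Real.Gamma (1 - α t) ≠ 0 := ne_of_gt hΓpos
  field_simp
  ring
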